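/- Given matrix factorizations W₁·1 = E₁J₁ = J₁E₁ and W₂·1 = E₂J₂ = J₂E₂ (with E_i, J_i square matrices of sizes r₁ and r₂ in disjoint sets of variables), the tensor-product construction E = [[E₁⊗1, 1⊗E₂],[1⊗J₂, −J₁⊗1]], J = [[J₁⊗1, 1⊗E₂],[1⊗J₂, −E₁⊗1]] satisfies E·J = (W₁+W₂)·1. -/

import Mathlib

open Matrix MvPolynomial Kronecker

lemma map_smul_one_aux {α β : Type*} [CommRing α] [CommRing β] {n : Type*} [Fintype n]
    [DecidableEq n] (f : α →+* β) (w : α) :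
    (w • (1 : Matrix n n α)).map f = f w • 1 := by
  ext i j; simp [Matrix.one_apply, apply_ite f]

theorem stmt2 (m l r₁ r₂ : ℕ)
    (W₁ : MvPolynomial (Fin m) ℂ) (W₂ : MvPolynomial (Fin l) ℂ)
    (E₁ J₁ : Matrix (Fin r₁) (Fin r₁) (MvPolynomial (Fin m) ℂ))
    (E₂ J₂ : Matrix (Fin r₂) (Fin r₂) (MvPolynomial (Fin l) ℂ))
    (h1 : E₁ * J₁ = W₁ • 1) (h1' : J₁ * E₁ = W₁ • 1)
    (h2 : E₂ * J₂ = W₂ • 1) (h2' : J₂ * E₂ = W₂ • 1) :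
    let R := MvPolynomial (Fin m ⊕ Fin l) ℂ
    let e₁ : Matrix (Fin r₁) (Fin r₁) R := E₁.map ⇑(rename Sum.inl)
    let j₁ : Matrix (Fin r₁) (Fin r₁) R := J₁.map ⇑(rename Sum.inl)
    let e₂ : Matrix (Fin r₂) (Fin r₂) R := E₂.map ⇑(rename Sum.inr)
    let j₂ : Matrix (Fin r₂) (Fin r₂) R := J₂.map ⇑(rename Sum.inr)
    fromBlocks (e₁ ⊗ₖ (1 : Matrix (Fin r₂) (Fin r₂) R))
        ((1 : Matrix (Fin r₁) (Fin r₁) R) ⊗ₖ e₂)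
        ((1 : Matrix (Fin r₁) (Fin r₁) R) ⊗ₖ j₂)
        (-(j₁ ⊗ₖ (1 : Matrix (Fin r₂) (Fin r₂) R))) *
      fromBlocks (j₁ ⊗ₖ (1 : Matrix (Fin r₂) (Fin r₂) R))
        ((1 : Matrix (Fin r₁) (Fin r₁) R) ⊗ₖ e₂)
        ((1 : Matrix (Fin r₁) (Fin r₁) R) ⊗ₖ j₂)
        (-(e₁ ⊗ₖ (1 : Matrix (Fin r₂) (Fin r₂) R))) =
      (rename Sum.inl W₁ + rename Sum.inr W₂) • 1 := by
  intro R e₁ j₁ e₂ j₂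
  set f₁ := (rename (R := ℂ) Sum.inl : MvPolynomial (Fin m) ℂ →ₐ[ℂ] R).toRingHom with hf₁
  set f₂ := (rename (R := ℂ) Sum.inr : MvPolynomial (Fin l) ℂ →ₐ[ℂ] R).toRingHom with hf₂
  have he1 : e₁ * j₁ = (rename Sum.inl W₁ : R) • 1 := by
    have := congrArg (Matrix.map · f₁) h1
    simp only [Matrix.map_mul, map_smul_one_aux] at this
    exact this
  have he1' : j₁ * e₁ = (rename Sum.inl W₁ : R) • 1 := by
    have := congrArg (Matrix.map · f₁) h1'
    simp only [Matrix.map_mul, map_smul_one_aux] at this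
    exact this
  have he2 : e₂ * j₂ = (rename Sum.inr W₂ : R) • 1 := by
    have := congrArg (Matrix.map · f₂) h2
    simp only [Matrix.map_mul, map_smul_one_aux] at this
    exact this
  have he2' : j₂ * e₂ = (rename Sum.inr W₂ : R) • 1 := by
    have := congrArg (Matrix.map · f₂) h2'
    simp only [Matrix.map_mul, map_smul_one_aux] at this
    exact this
  rw [fromBlocks_multiply]
  simp only [Matrix.mul_neg, Matrix.neg_mul, neg_neg, ← mul_kronecker_mul,
    one_mul, mul_one, he1, he1', he2, he2', smul_kronecker, kronecker_smul,
    one_kronecker_one]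
  rw [add_neg_cancel, add_neg_cancel, ← Matrix.fromBlocks_one, Matrix.fromBlocks_smul,
    smul_zero, add_smul]
  rw [add_comm ((rename Sum.inr) W₂ • (1 : Matrix (Fin r₁ × Fin r₂) (Fin r₁ × Fin r₂) R))]
  rw [neg_neg]
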